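/- On-shell twisted superpotential as a cubic symmetric function: For every finite family of real numbers Δ₁,…,Δ_n with Δ₁ + ⋯ + Δ_n = 2π, one has Σ_{I=1}^n F(Δ_I) = (1/2)·Σ_{a<b<c} Δ_a Δ_b Δ_c, where the right-hand side is half the third elementary symmetric polynomial of the Δ_I. (Equivalently, since F(u) = u(u − π)(u − 2π)/6, the sum of F over any reals summing to 2π equals e₃(Δ)/2.) -/

import Mathlib

open Real

lemma sum_powersetCard_insert {ι : Type*} [DecidableEq ι] {a : ι} {s : Finset ι}
    (h : a ∉ s) (f : ι → ℝ) (k : ℕ) :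
    ∑ t ∈ (insert a s).powersetCard (k + 1), ∏ i ∈ t, f i
      = ∑ t ∈ s.powersetCard (k + 1), ∏ i ∈ t, f i
        + f a * ∑ t ∈ s.powersetCard k, ∏ i ∈ t, f i := by
  rw [Finset.powersetCard_succ_insert h, Finset.sum_union, Finset.sum_image, Finset.mul_sum]
  · congr 1
    refine Finset.sum_congr rfl fun t ht => ?_
    have hts : t ⊆ s := (Finset.mem_powersetCard.mp ht).1
    rw [Finset.prod_insert (fun hat => h (hts hat))]
  · intro t1 h1 t2 h2 heq
    have h1s : a ∉ t1 := fun hc => h ((Finset.mem_powersetCard.mp h1).1 hc)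
    have h2s : a ∉ t2 := fun hc => h ((Finset.mem_powersetCard.mp h2).1 hc)
    have := congrArg (Finset.erase · a) heq
    simpa [Finset.erase_insert, h1s, h2s] using this
  · rw [Finset.disjoint_left]
    intro t ht htim
    obtain ⟨u, -, rfl⟩ := Finset.mem_image.mp htim
    exact h ((Finset.mem_powersetCard.mp ht).1 (Finset.mem_insert_self a u))

lemma e1_eq {ι : Type*} [DecidableEq ι] (s : Finset ι) (f : ι → ℝ) :
    ∑ t ∈ s.powersetCard 1, ∏ i ∈ t, f i = ∑ i ∈ s, f i := by
  induction s using Finset.induction_on with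
  | empty =>
    rw [Finset.powersetCard_eq_empty.mpr (by simp)]
    simp
  | insert _ _ ha ih =>
    rw [sum_powersetCard_insert ha f 0, ih, Finset.sum_insert ha]
    simp [Finset.powersetCard_zero]
    ring

lemma e2_eq {ι : Type*} [DecidableEq ι] (s : Finset ι) (f : ι → ℝ) :
    2 * ∑ t ∈ s.powersetCard 2, ∏ i ∈ t, f i
      = (∑ i ∈ s, f i) ^ 2 - ∑ i ∈ s, f i ^ 2 := by
  induction s using Finset.induction_on with
  | empty =>
    rw [Finset.powersetCard_eq_empty.mpr (by simp)]
    simp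
  | @insert a s ha ih =>
    rw [sum_powersetCard_insert ha f 1, e1_eq, Finset.sum_insert ha, Finset.sum_insert ha]
    ring_nf
    ring_nf at ih
    linarith [ih]

lemma e3_eq {ι : Type*} [DecidableEq ι] (s : Finset ι) (f : ι → ℝ) :
    6 * ∑ t ∈ s.powersetCard 3, ∏ i ∈ t, f i
      = (∑ i ∈ s, f i) ^ 3 - 3 * (∑ i ∈ s, f i) * (∑ i ∈ s, f i ^ 2)
        + 2 * ∑ i ∈ s, f i ^ 3 := by
  induction s using Finset.induction_on with
  | empty =>
    rw [Finset.powersetCard_eq_empty.mpr (by simp)]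
    simp
  | @insert a s ha ih =>
    have h2 := e2_eq s f
    rw [sum_powersetCard_insert ha f 2, Finset.sum_insert ha, Finset.sum_insert ha,
      Finset.sum_insert ha]
    linear_combination ih + 3 * f a * h2

/-- `F(u) = u³/6 − π u²/2 + π² u/3`, the paper's function `F = g₊`. -/
noncomputable def F (u : ℝ) : ℝ := u ^ 3 / 6 - π * u ^ 2 / 2 + π ^ 2 * u / 3

/-- On-shell twisted superpotential as a cubic symmetric function: for reals
`Δ₁,…,Δ_n` summing to `2π`, `Σ_I F(Δ_I)` equals half the third elementary
symmetric polynomial of the `Δ_I`. -/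
theorem stmt4 (n : ℕ) (Δ : Fin n → ℝ) (h : ∑ i, Δ i = 2 * π) :
    ∑ i, F (Δ i)
      = 1 / 2 * ∑ s ∈ Finset.powersetCard 3 (Finset.univ : Finset (Fin n)), ∏ i ∈ s, Δ i := by
  have h3 := e3_eq (Finset.univ : Finset (Fin n)) Δ
  rw [h] at h3
  have hF : ∑ i, F (Δ i)
      = (∑ i, Δ i ^ 3) / 6 - π * (∑ i, Δ i ^ 2) / 2 + π ^ 2 * (∑ i, Δ i) / 3 := by
    simp only [F]
    rw [Finset.sum_add_distrib, Finset.sum_sub_distrib, ← Finset.sum_div, ← Finset.sum_div,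
      ← Finset.sum_div, ← Finset.mul_sum, ← Finset.mul_sum]
  rw [hF, h]
  linarith [h3]
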